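/- Let n ≥ 1 and δ ≥ 1 be integers, α < β real numbers. Let b_0,…,b_n : ℝ → ℝ and B_0,…,B_{n+1} : ℝ → ℝ be differentiable functions satisfying: (i) partition of unity: Σ_{i=0}^{n} b_i(u) = 1 and Σ_{i=0}^{n+1} B_i(u) = 1 for all u ∈ ℝ; (ii) endpoint interpolation at α: b_0(α) = 1, b_i(α) = 0 for 1 ≤ i ≤ n, B_0(α) = 1, B_i(α) = 0 for 1 ≤ i ≤ n+1; (iii) first-derivative Hermite conditions at α: b_i'(α) = 0 for 2 ≤ i ≤ n, B_i'(α) = 0 for 2 ≤ i ≤ n+1, and B_1'(α) ≠ 0. If p_0,…,p_n ∈ ℝ^δ and q_0,…,q_{n+1} ∈ ℝ^δ satisfy Σ_{i=0}^{n} p_i · b_i(u) = Σ_{i=0}^{n+1} q_i · B_i(u) for all u ∈ ℝ, then q_1 = (1 − b_1'(α)/B_1'(α)) · p_0 + (b_1'(α)/B_1'(α)) · p_1. -/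
import Mathlib

lemma sum_head2 (m : ℕ) (hm : 2 ≤ m) (g : ℕ → ℝ)
    (hg : ∀ i, 2 ≤ i → i < m → g i = 0) :
    ∑ i ∈ Finset.range m, g i = g 0 + g 1 := by
  have h := Finset.sum_Ico_consecutive g (Nat.zero_le 2) hm
  rw [Finset.range_eq_Ico, ← h]
  have h2 : ∑ i ∈ Finset.Ico 2 m, g i = 0 :=
    Finset.sum_eq_zero fun i hi => by
      simp only [Finset.mem_Ico] at hi; exact hg i hi.1 hi.2
  rw [h2, add_zero]
  norm_num [Finset.sum_range_succ]

/-- the `i = 1` instance of formula (24) of the lemma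
'General order elevation'. -/
theorem stmt_16 (n δ : ℕ) (hn : 1 ≤ n) (hδ : 1 ≤ δ) (α β : ℝ) (hαβ : α < β)
    (b B : ℕ → ℝ → ℝ)
    (hbd : ∀ i ≤ n, Differentiable ℝ (b i))
    (hBd : ∀ i ≤ n + 1, Differentiable ℝ (B i))
    (hbpart : ∀ u : ℝ, ∑ i ∈ Finset.range (n + 1), b i u = 1)
    (hBpart : ∀ u : ℝ, ∑ i ∈ Finset.range (n + 2), B i u = 1)
    (hbα : b 0 α = 1) (hbα0 : ∀ i, 1 ≤ i → i ≤ n → b i α = 0)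
    (hBα : B 0 α = 1) (hBα0 : ∀ i, 1 ≤ i → i ≤ n + 1 → B i α = 0)
    (hb' : ∀ i, 2 ≤ i → i ≤ n → deriv (b i) α = 0)
    (hB' : ∀ i, 2 ≤ i → i ≤ n + 1 → deriv (B i) α = 0)
    (hB1 : deriv (B 1) α ≠ 0)
    (p q : ℕ → Fin δ → ℝ)
    (heq : ∀ u : ℝ,
      ∑ i ∈ Finset.range (n + 1), b i u • p i =
        ∑ i ∈ Finset.range (n + 2), B i u • q i) :
    q 1 = (1 - deriv (b 1) α / deriv (B 1) α) • p 0 +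
      (deriv (b 1) α / deriv (B 1) α) • p 1 := by
  -- q 0 = p 0
  have hq0 : q 0 = p 0 := by
    have h := heq α
    have hL : ∑ i ∈ Finset.range (n + 1), b i α • p i = p 0 := by
      rw [Finset.sum_eq_single_of_mem 0 (by simp)]
      · rw [hbα, one_smul]
      · intro i hi hne
        rw [hbα0 i (Nat.one_le_iff_ne_zero.mpr hne) (Nat.lt_succ_iff.mp (Finset.mem_range.mp hi)), zero_smul]
    have hR : ∑ i ∈ Finset.range (n + 2), B i α • q i = q 0 := by
      rw [Finset.sum_eq_single_of_mem 0 (by simp)]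
      · rw [hBα, one_smul]
      · intro i hi hne
        rw [hBα0 i (Nat.one_le_iff_ne_zero.mpr hne) (Nat.lt_succ_iff.mp (Finset.mem_range.mp hi)), zero_smul]
    rw [hL, hR] at h
    exact h.symm
  -- derivative of partition of unity sums
  have hbsum' : ∑ i ∈ Finset.range (n + 1), deriv (b i) α = 0 := by
    have : deriv (fun u => ∑ i ∈ Finset.range (n + 1), b i u) α = 0 := by
      have : (fun u : ℝ => ∑ i ∈ Finset.range (n + 1), b i u) = fun _ => (1 : ℝ) :=
        funext fun u => hbpart u
      rw [this, deriv_const]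
    rw [deriv_fun_sum (fun i hi =>
      ((hbd i (Nat.lt_succ_iff.mp (Finset.mem_range.mp hi))) α))] at this
    exact this
  have hBsum' : ∑ i ∈ Finset.range (n + 2), deriv (B i) α = 0 := by
    have : deriv (fun u => ∑ i ∈ Finset.range (n + 2), B i u) α = 0 := by
      have : (fun u : ℝ => ∑ i ∈ Finset.range (n + 2), B i u) = fun _ => (1 : ℝ) :=
        funext fun u => hBpart u
      rw [this, deriv_const]
    rw [deriv_fun_sum (fun i hi =>
      ((hBd i (Nat.lt_succ_iff.mp (Finset.mem_range.mp hi))) α))] at this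
    exact this
  have hb0' : deriv (b 0) α = - deriv (b 1) α := by
    have h2 := sum_head2 (n + 1) (by omega) (fun i => deriv (b i) α)
      (fun i h2i hin => hb' i h2i (by omega))
    rw [h2] at hbsum'
    linarith
  have hB0' : deriv (B 0) α = - deriv (B 1) α := by
    have h2 := sum_head2 (n + 2) (by omega) (fun i => deriv (B i) α)
      (fun i h2i hin => hB' i h2i (by omega))
    rw [h2] at hBsum'
    linarith
  -- componentwise
  funext j
  -- derivative of the coordinate functions
  have hderiv : ∑ i ∈ Finset.range (n + 1), deriv (b i) α * p i j =
      ∑ i ∈ Finset.range (n + 2), deriv (B i) α * q i j := by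
    have hfun : (fun u => ∑ i ∈ Finset.range (n + 1), b i u * p i j) =
        (fun u => ∑ i ∈ Finset.range (n + 2), B i u * q i j) := by
      funext u
      have := congrFun (heq u) j
      simpa using this
    have hL : deriv (fun u => ∑ i ∈ Finset.range (n + 1), b i u * p i j) α =
        ∑ i ∈ Finset.range (n + 1), deriv (b i) α * p i j := by
      rw [deriv_fun_sum (fun i hi =>
        (((hbd i (Nat.lt_succ_iff.mp (Finset.mem_range.mp hi))) α).mul_const (p i j)))]
      exact Finset.sum_congr rfl fun i hi => by
        rw [deriv_mul_const ((hbd i (Nat.lt_succ_iff.mp (Finset.mem_range.mp hi))) α)]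
    have hR : deriv (fun u => ∑ i ∈ Finset.range (n + 2), B i u * q i j) α =
        ∑ i ∈ Finset.range (n + 2), deriv (B i) α * q i j := by
      rw [deriv_fun_sum (fun i hi =>
        (((hBd i (Nat.lt_succ_iff.mp (Finset.mem_range.mp hi))) α).mul_const (q i j)))]
      exact Finset.sum_congr rfl fun i hi => by
        rw [deriv_mul_const ((hBd i (Nat.lt_succ_iff.mp (Finset.mem_range.mp hi))) α)]
    rw [← hL, ← hR, hfun]
  rw [sum_head2 (n + 1) (by omega) _ (fun i h2i hin => by
      simp [hb' i h2i (by omega)]),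
    sum_head2 (n + 2) (by omega) _ (fun i h2i hin => by
      simp [hB' i h2i (by omega)])] at hderiv
  rw [hb0', hB0', hq0] at hderiv
  have : q 1 j = (1 - deriv (b 1) α / deriv (B 1) α) * p 0 j +
      (deriv (b 1) α / deriv (B 1) α) * p 1 j := by
    field_simp
    ring_nf
    ring_nf at hderiv
    linarith
  simpa using this
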